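/- arXiv:2602.05497 — 3 statements merged into one kernel-verified Lean document; each statement's English description precedes it below -/
import Mathlib

section
/- Let α₁, α₂, α₃ : ℝ → ℝ be continuous with 0 ≤ αⱼ(t) ≤ α₀ for all t, let ζ ≥ 1, and set z = ζ + i. For x, y ∈ ℝ³ define the stretched coordinates x̃ⱼ = xⱼ + z∫₀^{xⱼ} αⱼ(t)dt and ỹⱼ analogously, and let d(x̃,ỹ)² = Σⱼ (x̃ⱼ − ỹⱼ)². Then |x − y|² ≤ |d(x̃,ỹ)²| ≤ ((1+ζα₀)² + α₀²)·|x − y|². -/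
open Complex intervalIntegral

/-- Two-sided bound for the square of the PML complex distance. -/
theorem stmt_2 (α : Fin 3 → ℝ → ℝ) (α₀ ζ : ℝ)
    (hcont : ∀ j, Continuous (α j))
    (hnn : ∀ j t, 0 ≤ α j t) (hub : ∀ j t, α j t ≤ α₀)
    (hζ : 1 ≤ ζ) (x y : Fin 3 → ℝ) :
    let z : ℂ := ζ + Complex.I
    let xt : Fin 3 → ℂ := fun j => (x j : ℂ) + z * (∫ t in (0:ℝ)..(x j), α j t : ℝ)
    let yt : Fin 3 → ℂ := fun j => (y j : ℂ) + z * (∫ t in (0:ℝ)..(y j), α j t : ℝ)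
    let dsq : ℂ := ∑ j, (xt j - yt j) ^ 2
    (∑ j, (x j - y j) ^ 2) ≤ ‖dsq‖ ∧
      ‖dsq‖ ≤ ((1 + ζ * α₀) ^ 2 + α₀ ^ 2) * ∑ j, (x j - y j) ^ 2 := by
  intro z xt yt dsq
  have hα₀ : 0 ≤ α₀ := le_trans (hnn 0 0) (hub 0 0)
  set I : Fin 3 → ℝ := fun j => ∫ t in (y j)..(x j), α j t with hI
  have hint : ∀ j (a b : ℝ), IntervalIntegrable (α j) MeasureTheory.volume a b :=
    fun j a b => (hcont j).intervalIntegrable a b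
  have hdiff : ∀ j, xt j - yt j = ((x j - y j : ℝ) : ℂ) + z * (I j) := by
    intro j
    have h := intervalIntegral.integral_interval_sub_left (hint j 0 (x j)) (hint j 0 (y j))
    simp only [xt, yt, hI]
    rw [← h]
    push_cast
    ring
  -- sign of the integral relative to x j - y j
  have hsign : ∀ j, 0 ≤ (x j - y j) * I j := by
    intro j
    rcases le_total (y j) (x j) with h | h
    · have : 0 ≤ I j := intervalIntegral.integral_nonneg h (fun t _ => hnn j t)
      have : 0 ≤ x j - y j := by linarith
      exact mul_nonneg this (intervalIntegral.integral_nonneg h (fun t _ => hnn j t))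
    · have h1 : 0 ≤ ∫ t in (x j)..(y j), α j t :=
        intervalIntegral.integral_nonneg h (fun t _ => hnn j t)
      have h2 : I j = -∫ t in (x j)..(y j), α j t := by
        simp [hI, intervalIntegral.integral_symm (x j) (y j)]
      have : I j ≤ 0 := by rw [h2]; linarith
      have hd : x j - y j ≤ 0 := by linarith
      nlinarith
  have hbound : ∀ j, |I j| ≤ α₀ * |x j - y j| := by
    intro j
    have := intervalIntegral.norm_integral_le_of_norm_le_const
      (C := α₀) (f := α j) (a := y j) (b := x j)
      (fun t _ => by rw [Real.norm_eq_abs, _root_.abs_of_nonneg (hnn j t)]; exact hub j t)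
    rw [Real.norm_eq_abs] at this
    exact this
  -- components
  have hre : ∀ j, (xt j - yt j).re = (x j - y j) + ζ * I j := by
    intro j; rw [hdiff j]; simp [z]
  have him : ∀ j, (xt j - yt j).im = I j := by
    intro j; rw [hdiff j]; simp [z]
  have hsq_re : ∀ j, ((xt j - yt j) ^ 2).re
      = ((x j - y j) + ζ * I j) ^ 2 - (I j) ^ 2 := by
    intro j
    rw [sq, Complex.mul_re, hre j, him j]
    ring
  have habs_sq : ∀ j, ‖(xt j - yt j) ^ 2‖
      = ((x j - y j) + ζ * I j) ^ 2 + (I j) ^ 2 := by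
    intro j
    rw [norm_pow, ← Complex.normSq_eq_norm_sq, Complex.normSq_apply, hre j, him j]
    ring
  constructor
  · -- lower bound via real part
    have h1 : (∑ j, (x j - y j) ^ 2) ≤ dsq.re := by
      have : dsq.re = ∑ j, ((xt j - yt j) ^ 2).re := by
        simp [dsq, Complex.re_sum]
      rw [this]
      apply Finset.sum_le_sum
      intro j _
      rw [hsq_re j]
      nlinarith [mul_nonneg (by linarith : (0:ℝ) ≤ ζ) (hsign j), mul_nonneg (by nlinarith : (0:ℝ) ≤ ζ^2 - 1) (sq_nonneg (I j))]
    exact le_trans h1 (Complex.re_le_norm dsq)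
  · -- upper bound via triangle inequality
    have h1 : ‖dsq‖ ≤ ∑ j, ‖(xt j - yt j) ^ 2‖ := by
      have h := norm_sum_le Finset.univ (fun j => (xt j - yt j) ^ 2)
      exact h
    refine le_trans h1 ?_
    rw [Finset.mul_sum]
    apply Finset.sum_le_sum
    intro j _
    rw [habs_sq j]
    have hdI : (x j - y j) * I j ≤ α₀ * (x j - y j) ^ 2 := by
      calc (x j - y j) * I j ≤ |(x j - y j) * I j| := le_abs_self _
        _ = |x j - y j| * |I j| := abs_mul _ _
        _ ≤ |x j - y j| * (α₀ * |x j - y j|) :=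
            mul_le_mul_of_nonneg_left (hbound j) (abs_nonneg _)
        _ = α₀ * (x j - y j) ^ 2 := by rw [← _root_.sq_abs]; ring
    have hI2 : (I j) ^ 2 ≤ α₀ ^ 2 * (x j - y j) ^ 2 := by
      have := sq_le_sq' (by linarith [abs_nonneg (I j), neg_abs_le (I j), hbound j] : -(α₀ * |x j - y j|) ≤ I j) (le_trans (le_abs_self _) (hbound j))
      calc (I j) ^ 2 ≤ (α₀ * |x j - y j|) ^ 2 := this
        _ = α₀ ^ 2 * (x j - y j) ^ 2 := by rw [mul_pow, _root_.sq_abs]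
    nlinarith [hdI, hI2, mul_le_mul_of_nonneg_left hdI (by linarith : (0:ℝ) ≤ ζ),
      mul_le_mul_of_nonneg_left hI2 (by positivity : (0:ℝ) ≤ ζ ^ 2)]
end

section
/- Let ζ ≥ √((λ+2μ)/μ) with Lamé constants μ > 0 and λ + μ > 0. For any α₁, α₂, α₃ ∈ [0, ∞) set sⱼ = 1 + (ζ + i)αⱼ. Then for each j ∈ {1,2,3}, (1 + μ/(λ+μ))·Re( s₁s₂s₃ / sⱼ² ) ≥ (1+ζα₁)(1+ζα₂)(1+ζα₃)/(1+ζαⱼ)² + (μ/(λ+μ))·|sⱼ|^{−2}. -/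
lemma key_poly (κ ζ a1 a2 a3 : ℝ) (hκ : 0 < κ) (hζ0 : 0 ≤ ζ)
    (hk : 1 + κ ≤ κ * ζ^2) (h1 : 0 ≤ a1) (h2 : 0 ≤ a2) (h3 : 0 ≤ a3) :
    (1+ζ*a2)*(1+ζ*a3)*((1+ζ*a1)^2 + a1^2) + κ*(1+ζ*a1)
      ≤ (1+κ)*(1+ζ*a1)*((1+ζ*a1)*((1+ζ*a2)*(1+ζ*a3) - a2*a3)
          + a1*((1+ζ*a2)*a3 + a2*(1+ζ*a3))) := by
  have hza1 : 0 ≤ ζ * a1 := mul_nonneg hζ0 h1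
  set b1 : ℝ := 1 + ζ*a1 with hb1
  have B0 : 0 ≤ κ*ζ*a1 + (κ*ζ^2-1)*a1^2 := by nlinarith [sq_nonneg a1]
  have B1 : 0 ≤ κ*ζ*b1^2 + (1+κ)*b1*a1 - ζ*a1^2 := by
    nlinarith [sq_nonneg a1, mul_nonneg h1 hza1, mul_nonneg (mul_nonneg hκ.le hζ0) (mul_nonneg h1 hza1), mul_nonneg hζ0 (mul_nonneg h1 hza1), mul_nonneg hκ.le hζ0]
  have B2 : 0 ≤ (κ*ζ^2-1-κ)*b1^2 + 2*(1+κ)*ζ*b1*a1 - ζ^2*a1^2 := by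
    nlinarith [mul_nonneg hζ0 (mul_nonneg h1 hza1), sq_nonneg (ζ*a1), mul_nonneg (sub_nonneg.2 hk) (sq_nonneg b1), mul_nonneg hκ.le (mul_nonneg hζ0 (mul_nonneg h1 hza1))]
  have key : 0 ≤ κ*ζ*a1 + (κ*ζ^2-1)*a1^2
      + (a2+a3)*(κ*ζ*b1^2 + (1+κ)*b1*a1 - ζ*a1^2)
      + a2*a3*((κ*ζ^2-1-κ)*b1^2 + 2*(1+κ)*ζ*b1*a1 - ζ^2*a1^2) := by
    have := mul_nonneg (add_nonneg h2 h3) B1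
    have := mul_nonneg (mul_nonneg h2 h3) B2
    linarith
  have ering : (1+κ)*b1*(b1*((1+ζ*a2)*(1+ζ*a3) - a2*a3)
          + a1*((1+ζ*a2)*a3 + a2*(1+ζ*a3)))
        - ((1+ζ*a2)*(1+ζ*a3)*(b1^2 + a1^2) + κ*b1)
      = κ*ζ*a1 + (κ*ζ^2-1)*a1^2
      + (a2+a3)*(κ*ζ*b1^2 + (1+κ)*b1*a1 - ζ*a1^2)
      + a2*a3*((κ*ζ^2-1-κ)*b1^2 + 2*(1+κ)*ζ*b1*a1 - ζ^2*a1^2) := by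
    simp only [hb1]; ring
  linarith [key, ering]

lemma main_case (κ ζ a1 a2 a3 : ℝ) (hκ : 0 < κ) (hζ0 : 0 ≤ ζ)
    (hk : 1 + κ ≤ κ * ζ^2) (h1 : 0 ≤ a1) (h2 : 0 ≤ a2) (h3 : 0 ≤ a3) :
    (1+ζ*a1)*(1+ζ*a2)*(1+ζ*a3)/(1+ζ*a1)^2
        + κ * ‖1 + (ζ + Complex.I)*(a1:ℂ)‖⁻¹^2
      ≤ (1+κ) * (((1 + (ζ+Complex.I)*(a1:ℂ)) * (1 + (ζ+Complex.I)*(a2:ℂ))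
          * (1 + (ζ+Complex.I)*(a3:ℂ))) / (1 + (ζ+Complex.I)*(a1:ℂ))^2).re := by
  set w : ℂ := 1 + (ζ+Complex.I)*(a1:ℂ) with hw
  set z2 : ℂ := 1 + (ζ+Complex.I)*(a2:ℂ) with hz2
  set z3 : ℂ := 1 + (ζ+Complex.I)*(a3:ℂ) with hz3
  have hb1 : (0:ℝ) < 1 + ζ*a1 := by nlinarith [mul_nonneg hζ0 h1]
  have hwre : w.re = 1 + ζ*a1 := by simp [hw]
  have hwim : w.im = a1 := by simp [hw]
  have hz2re : z2.re = 1 + ζ*a2 := by simp [hz2]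
  have hz2im : z2.im = a2 := by simp [hz2]
  have hz3re : z3.re = 1 + ζ*a3 := by simp [hz3]
  have hz3im : z3.im = a3 := by simp [hz3]
  have hw0 : w ≠ 0 := by
    intro h; rw [h] at hwre; simp at hwre; linarith
  have hdiv : w * z2 * z3 / w^2 = z2 * z3 / w := by
    field_simp
  rw [hdiv, Complex.div_re, inv_pow, Complex.sq_norm, Complex.mul_re, Complex.mul_im,
    Complex.normSq_apply, hwre, hwim, hz2re, hz2im, hz3re, hz3im]
  have hD : (0:ℝ) < (1+ζ*a1)*(1+ζ*a1) + a1*a1 := by positivity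
  have key := key_poly κ ζ a1 a2 a3 hκ hζ0 hk h1 h2 h3
  have hXX : (1+ζ*a1)*(1+ζ*a2)*(1+ζ*a3)/(1+ζ*a1)^2 = (1+ζ*a2)*(1+ζ*a3)/(1+ζ*a1) := by
    field_simp
  rw [hXX]
  have key := key_poly κ ζ a1 a2 a3 hκ hζ0 hk h1 h2 h3
  have keynn : 0 ≤ (1+κ)*(1+ζ*a1)*((1+ζ*a1)*((1+ζ*a2)*(1+ζ*a3) - a2*a3)
        + a1*((1+ζ*a2)*a3 + a2*(1+ζ*a3)))
      - ((1+ζ*a2)*(1+ζ*a3)*((1+ζ*a1)^2 + a1^2) + κ*(1+ζ*a1)) := sub_nonneg.2 key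
  have hfrac : 0 ≤ ((1+κ)*(1+ζ*a1)*((1+ζ*a1)*((1+ζ*a2)*(1+ζ*a3) - a2*a3)
        + a1*((1+ζ*a2)*a3 + a2*(1+ζ*a3)))
      - ((1+ζ*a2)*(1+ζ*a3)*((1+ζ*a1)^2 + a1^2) + κ*(1+ζ*a1)))
      / ((1+ζ*a1)*((1+ζ*a1)*(1+ζ*a1)+a1*a1)) :=
    div_nonneg keynn (by positivity)
  have hE : (1 + κ) *
      (((1 + ζ * a2) * (1 + ζ * a3) - a2 * a3) * (1 + ζ * a1) / ((1 + ζ * a1) * (1 + ζ * a1) + a1 * a1) +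
        ((1 + ζ * a2) * a3 + a2 * (1 + ζ * a3)) * a1 / ((1 + ζ * a1) * (1 + ζ * a1) + a1 * a1))
      - ((1 + ζ * a2) * (1 + ζ * a3) / (1 + ζ * a1) + κ * ((1 + ζ * a1) * (1 + ζ * a1) + a1 * a1)⁻¹)
    = ((1+κ)*(1+ζ*a1)*((1+ζ*a1)*((1+ζ*a2)*(1+ζ*a3) - a2*a3)
        + a1*((1+ζ*a2)*a3 + a2*(1+ζ*a3)))
      - ((1+ζ*a2)*(1+ζ*a3)*((1+ζ*a1)^2 + a1^2) + κ*(1+ζ*a1)))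
      / ((1+ζ*a1)*((1+ζ*a1)*(1+ζ*a1)+a1*a1)) := by
    field_simp
  linarith [hfrac, hE]

/-- Elementary complex inequality (Chen–Xiang–Zhang, Lemma 3.1) underlying the
coercivity of the thermoelastic PML sesquilinear form. -/
theorem stmt_8 (lam μ ζ : ℝ) (hμ : 0 < μ) (hlamμ : 0 < lam + μ)
    (hζ : Real.sqrt ((lam + 2 * μ) / μ) ≤ ζ)
    (α : Fin 3 → ℝ) (hα : ∀ j, 0 ≤ α j) :
    let s : Fin 3 → ℂ := fun j => 1 + (ζ + Complex.I) * (α j : ℂ)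
    ∀ j : Fin 3,
      (1 + ζ * α 0) * (1 + ζ * α 1) * (1 + ζ * α 2) / (1 + ζ * α j) ^ 2
          + (μ / (lam + μ)) * ‖s j‖⁻¹ ^ 2
        ≤ (1 + μ / (lam + μ)) * ((s 0 * s 1 * s 2) / (s j) ^ 2).re := by
  intro s j
  set κ : ℝ := μ / (lam + μ) with hκdef
  have hκ : 0 < κ := div_pos hμ hlamμ
  have hζ0 : 0 ≤ ζ := le_trans (Real.sqrt_nonneg _) hζ
  have hx : 0 ≤ (lam + 2*μ)/μ := by
    have : 0 < lam + 2*μ := by linarith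
    positivity
  have hsq : (lam + 2*μ)/μ ≤ ζ^2 := by
    calc (lam + 2*μ)/μ = (Real.sqrt ((lam + 2*μ)/μ))^2 := (Real.sq_sqrt hx).symm
    _ ≤ ζ^2 := pow_le_pow_left₀ (Real.sqrt_nonneg _) hζ 2
  have hk : 1 + κ ≤ κ * ζ^2 := by
    have hid : κ * ((lam + 2*μ)/μ) = 1 + κ := by
      rw [hκdef]; field_simp; ring
    calc 1 + κ = κ * ((lam + 2*μ)/μ) := hid.symm
    _ ≤ κ * ζ^2 := mul_le_mul_of_nonneg_left hsq hκ.le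
  fin_cases j
  · have H := main_case κ ζ (α 0) (α 1) (α 2) hκ hζ0 hk (hα 0) (hα 1) (hα 2)
    simpa [s] using H
  · have H := main_case κ ζ (α 1) (α 0) (α 2) hκ hζ0 hk (hα 1) (hα 0) (hα 2)
    have e1 : s 0 * s 1 * s 2 = s 1 * s 0 * s 2 := by ring
    have e2 : (1 + ζ * α 0) * (1 + ζ * α 1) * (1 + ζ * α 2)
        = (1 + ζ * α 1) * (1 + ζ * α 0) * (1 + ζ * α 2) := by ring
    simp only [Fin.isValue]
    rw [show ((1:Fin 3) : Fin 3) = 1 from rfl] at *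
    rw [e2, e1]
    simpa [s] using H
  · have H := main_case κ ζ (α 2) (α 0) (α 1) hκ hζ0 hk (hα 2) (hα 0) (hα 1)
    have e1 : s 0 * s 1 * s 2 = s 2 * s 0 * s 1 := by ring
    have e2 : (1 + ζ * α 0) * (1 + ζ * α 1) * (1 + ζ * α 2)
        = (1 + ζ * α 2) * (1 + ζ * α 0) * (1 + ζ * α 1) := by ring
    rw [e2, e1]
    simpa [s] using H
end

section
/- Let λ, μ, γ > 0 with λ + μ > 0, let ζ ≥ 0, and suppose α₀ < (λ+μ)/(2γ(λ+2μ)). Then for all α₁, α₂, α₃ ∈ [0, α₀]: ((λ+μ)/(λ+2μ))·(1+ζα₂)(1+ζα₃)/(1+ζα₁) > γ(α₂ + α₃ + 2ζα₂α₃). -/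
/-- First-order absorption inequality for the thermoelastic PML form. -/
theorem stmt_12 (lam μ γ ζ α₀ α₁ α₂ α₃ : ℝ)
    (hlam : 0 < lam) (hμ : 0 < μ) (hγ : 0 < γ) (hlamμ : 0 < lam + μ)
    (hζ : 0 ≤ ζ) (hα₀ : α₀ < (lam + μ) / (2 * γ * (lam + 2 * μ)))
    (h₁ : α₁ ∈ Set.Icc 0 α₀) (h₂ : α₂ ∈ Set.Icc 0 α₀) (h₃ : α₃ ∈ Set.Icc 0 α₀) :
    γ * (α₂ + α₃ + 2 * ζ * α₂ * α₃)
      < ((lam + μ) / (lam + 2 * μ)) * ((1 + ζ * α₂) * (1 + ζ * α₃) / (1 + ζ * α₁)) := by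
  obtain ⟨h1l, h1r⟩ := h₁
  obtain ⟨h2l, h2r⟩ := h₂
  obtain ⟨h3l, h3r⟩ := h₃
  have hl2μ : (0:ℝ) < lam + 2 * μ := by linarith
  have hden : (0:ℝ) < 2 * γ * (lam + 2 * μ) := by positivity
  have hC : 2 * γ * α₀ * (lam + 2 * μ) < lam + μ := by
    have := (lt_div_iff₀ hden).mp hα₀
    linarith [this]
  have h1pos : (0:ℝ) < 1 + ζ * α₁ := by positivity
  have key : γ * (α₂ + α₃ + 2 * ζ * α₂ * α₃) * (lam + 2 * μ) * (1 + ζ * α₁)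
      < (lam + μ) * ((1 + ζ * α₂) * (1 + ζ * α₃)) := by
    nlinarith [mul_nonneg (mul_nonneg hζ h2l) h3l, mul_nonneg hζ h2l,
      mul_nonneg hζ h3l, mul_nonneg hζ h1l,
      mul_nonneg (mul_nonneg hζ hζ) (mul_nonneg h2l h3l),
      mul_le_mul_of_nonneg_left h2r (le_of_lt hγ),
      sq_nonneg (α₂ - α₃), sq_nonneg (α₁ - α₂), sq_nonneg (α₁ - α₃),
      mul_nonneg (mul_nonneg hγ.le hζ) (mul_nonneg h2l (sub_nonneg.mpr h3r)),
      mul_nonneg (mul_nonneg hγ.le hζ) (mul_nonneg h3l (sub_nonneg.mpr h2r)),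
      mul_nonneg (mul_nonneg hγ.le hζ) (mul_nonneg h2l (sub_nonneg.mpr h1r)),
      mul_nonneg (mul_nonneg hγ.le hζ) (mul_nonneg h3l (sub_nonneg.mpr h1r)),
      mul_nonneg (mul_nonneg (mul_nonneg hγ.le (mul_nonneg hζ hζ))
        (mul_nonneg h2l h3l)) (sub_nonneg.mpr h1r),
      mul_pos hγ hl2μ, hC,
      mul_nonneg (sub_nonneg.mpr hC.le) (mul_nonneg hζ h2l),
      mul_nonneg (sub_nonneg.mpr hC.le) (mul_nonneg hζ h3l),
      mul_nonneg (sub_nonneg.mpr hC.le) (mul_nonneg (mul_nonneg hζ hζ) (mul_nonneg h2l h3l))]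
  rw [div_mul_div_comm, lt_div_iff₀ (by positivity)]
  nlinarith [key]
end
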